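/- arXiv:1402.6036 — 4 statements merged into one kernel-verified Lean document; each statement's English description precedes it below -/
import Mathlib

section
/- In the group 𝕃(p), every element g can be written uniquely in the form g = m·c + Σ_{i=1}^t m_i·x_i, where m ∈ ℤ and the m_i are integers with 0 ≤ m_i < p_i for each i ∈ {1,…,t}. That is, such integers m, m_1, …, m_t exist for every g, and they are uniquely determined by g. -/
open scoped TensorProduct

/-- The subgroup of relations `p_i • x_i − c` defining `𝕃(p)` inside the free
abelian group on the generators `x_1,…,x_t` (indexed by `Fin t`) and `c`
(indexed by `Unit`). -/
def Lrel (t : ℕ) (p : Fin t → ℕ) : AddSubgroup (FreeAbelianGroup (Fin t ⊕ Unit)) :=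
  AddSubgroup.closure
    {g | ∃ i : Fin t, g = (p i) • FreeAbelianGroup.of (Sum.inl i) -
        FreeAbelianGroup.of (Sum.inr ())}

/-- The group `𝕃(p)`, presented by generators `x_1,…,x_t,c` and relations
`p_1 x_1 = ⋯ = p_t x_t = c`. -/
abbrev LGroup (t : ℕ) (p : Fin t → ℕ) :=
  FreeAbelianGroup (Fin t ⊕ Unit) ⧸ Lrel t p

/-- The generator `x_i` of `𝕃(p)`. -/
def Lx (t : ℕ) (p : Fin t → ℕ) (i : Fin t) : LGroup t p :=
  QuotientAddGroup.mk (FreeAbelianGroup.of (Sum.inl i))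

/-- The canonical element `c` of `𝕃(p)`. -/
def Lc (t : ℕ) (p : Fin t → ℕ) : LGroup t p :=
  QuotientAddGroup.mk (FreeAbelianGroup.of (Sum.inr ()))

/-! ### Auxiliary lemmas -/

lemma pLx_eq_Lc (t : ℕ) (p : Fin t → ℕ) (i : Fin t) :
    (p i : ℤ) • Lx t p i = Lc t p := by
  have h : (p i) • FreeAbelianGroup.of (Sum.inl i) -
      FreeAbelianGroup.of (Sum.inr ()) ∈ Lrel t p :=
    AddSubgroup.subset_closure ⟨i, rfl⟩
  have h2 : (QuotientAddGroup.mk ((p i) • FreeAbelianGroup.of (Sum.inl i)) :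
      LGroup t p) = QuotientAddGroup.mk (FreeAbelianGroup.of (Sum.inr ())) :=
    (QuotientAddGroup.eq_iff_sub_mem).mpr h
  rw [Lx, Lc, ← h2, natCast_zsmul]
  exact (map_nsmul (QuotientAddGroup.mk' (Lrel t p)) _ _).symm

/-- Every element of `𝕃(p)` is an integer combination of `c` and the `x_i`. -/
lemma exists_repr (t : ℕ) (p : Fin t → ℕ) (g : LGroup t p) :
    ∃ m : ℤ, ∃ a : Fin t → ℤ, g = m • Lc t p + ∑ i, a i • Lx t p i := by
  induction g using QuotientAddGroup.induction_on with
  | H x =>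
    induction x using FreeAbelianGroup.induction_on with
    | zero => exact ⟨0, 0, by simp⟩
    | of s =>
      cases s with
      | inl i =>
        refine ⟨0, fun j => if j = i then 1 else 0, ?_⟩
        have : (QuotientAddGroup.mk (FreeAbelianGroup.of (Sum.inl i)) :
            LGroup t p) = Lx t p i := rfl
        rw [this]
        simp [ite_smul, Finset.sum_ite_eq']
      | inr u =>
        refine ⟨1, 0, ?_⟩
        have : (QuotientAddGroup.mk (FreeAbelianGroup.of (Sum.inr u)) :
            LGroup t p) = Lc t p := rfl
        rw [this]
        simp
    | neg x ih =>
      obtain ⟨m, a, h⟩ := ih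
      refine ⟨-m, -a, ?_⟩
      rw [QuotientAddGroup.mk_neg, h]
      simp only [neg_add, neg_smul, Pi.neg_apply, ← Finset.sum_neg_distrib]
    | add x y ihx ihy =>
      obtain ⟨m1, a1, h1⟩ := ihx
      obtain ⟨m2, a2, h2⟩ := ihy
      refine ⟨m1 + m2, a1 + a2, ?_⟩
      rw [QuotientAddGroup.mk_add, h1, h2]
      simp only [Pi.add_apply, add_smul, Finset.sum_add_distrib]
      abel

/-- Renormalization: reduce the coefficients modulo `p i`. -/
lemma renorm (t : ℕ) (p : Fin t → ℕ) (m : ℤ) (a : Fin t → ℤ) :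
    m • Lc t p + ∑ i, a i • Lx t p i
      = (m + ∑ i, a i / (p i : ℤ)) • Lc t p
        + ∑ i, (a i % (p i : ℤ)) • Lx t p i := by
  have key : ∀ i, a i • Lx t p i
      = (a i / (p i : ℤ)) • Lc t p + (a i % (p i : ℤ)) • Lx t p i := by
    intro i
    conv_lhs => rw [← Int.mul_ediv_add_emod (a i) (p i : ℤ)]
    rw [add_smul, mul_comm, mul_smul, pLx_eq_Lc]
  calc m • Lc t p + ∑ i, a i • Lx t p i
      = m • Lc t p + ∑ i, ((a i / (p i : ℤ)) • Lc t p
          + (a i % (p i : ℤ)) • Lx t p i) := by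
        rw [Finset.sum_congr rfl fun i _ => key i]
    _ = (m + ∑ i, a i / (p i : ℤ)) • Lc t p
          + ∑ i, (a i % (p i : ℤ)) • Lx t p i := by
        rw [Finset.sum_add_distrib, add_smul, Finset.sum_smul]
        abel

/-- The residue character `χ_i : 𝕃(p) →+ ZMod (p i)`. -/
def chiF (t : ℕ) (p : Fin t → ℕ) (i : Fin t) :
    FreeAbelianGroup (Fin t ⊕ Unit) →+ ZMod (p i) :=
  FreeAbelianGroup.lift (Sum.elim (fun j => if j = i then (1 : ZMod (p i)) else 0)
    (fun _ => 0))

lemma chiF_rel (t : ℕ) (p : Fin t → ℕ) (i : Fin t) :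
    ∀ x ∈ Lrel t p, chiF t p i x = 0 := by
  have : Lrel t p ≤ (chiF t p i).ker := by
    rw [Lrel]
    apply AddSubgroup.closure_le _ |>.mpr
    rintro x ⟨j, rfl⟩
    simp only [SetLike.mem_coe, AddMonoidHom.mem_ker, map_sub, map_nsmul]
    rw [chiF]
    simp only [FreeAbelianGroup.lift_apply_of, Sum.elim_inl, Sum.elim_inr]
    by_cases hji : j = i
    · subst hji
      simp [nsmul_eq_mul]
    · simp [hji]
  exact fun x hx => this hx

def chi (t : ℕ) (p : Fin t → ℕ) (i : Fin t) : LGroup t p →+ ZMod (p i) :=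
  QuotientAddGroup.lift _ (chiF t p i)
    (fun x hx => (AddMonoidHom.mem_ker).mpr (chiF_rel t p i x hx))

lemma chi_Lx (t : ℕ) (p : Fin t → ℕ) (i j : Fin t) :
    chi t p i (Lx t p j) = if j = i then 1 else 0 := by
  rw [chi, Lx, QuotientAddGroup.lift_mk, chiF, FreeAbelianGroup.lift_apply_of, Sum.elim_inl]

lemma chi_Lc (t : ℕ) (p : Fin t → ℕ) (i : Fin t) :
    chi t p i (Lc t p) = 0 := by
  rw [chi, Lc, QuotientAddGroup.lift_mk, chiF, FreeAbelianGroup.lift_apply_of, Sum.elim_inr]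

lemma chi_normal (t : ℕ) (p : Fin t → ℕ) (i : Fin t) (m : ℤ) (a : Fin t → ℤ) :
    chi t p i (m • Lc t p + ∑ j, a j • Lx t p j) = (a i : ZMod (p i)) := by
  rw [map_add, map_zsmul, map_sum, chi_Lc, smul_zero, zero_add]
  have : ∀ j, chi t p i (a j • Lx t p j)
      = if j = i then (a j : ZMod (p i)) else 0 := by
    intro j
    rw [map_zsmul, chi_Lx]
    by_cases h : j = i <;> simp [h, zsmul_eq_mul]
  rw [Finset.sum_congr rfl fun j _ => this j, Finset.sum_ite_eq' Finset.univ i]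
  simp

/-- The rational character sending `x_i ↦ 1/p_i` and `c ↦ 1`. -/
def rhoF (t : ℕ) (p : Fin t → ℕ) : FreeAbelianGroup (Fin t ⊕ Unit) →+ ℚ :=
  FreeAbelianGroup.lift (Sum.elim (fun j => ((p j : ℚ))⁻¹) (fun _ => (1 : ℚ)))

lemma rhoF_rel (t : ℕ) (p : Fin t → ℕ) (hp : ∀ i, 0 < p i) :
    ∀ x ∈ Lrel t p, rhoF t p x = 0 := by
  have : Lrel t p ≤ (rhoF t p).ker := by
    rw [Lrel]
    apply AddSubgroup.closure_le _ |>.mpr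
    rintro x ⟨j, rfl⟩
    simp only [SetLike.mem_coe, AddMonoidHom.mem_ker, map_sub, map_nsmul]
    rw [rhoF]
    simp only [FreeAbelianGroup.lift_apply_of, Sum.elim_inl, Sum.elim_inr]
    rw [nsmul_eq_mul, mul_inv_cancel₀, sub_self]
    exact_mod_cast (hp j).ne'
  exact fun x hx => this hx

def rho (t : ℕ) (p : Fin t → ℕ) (hp : ∀ i, 0 < p i) : LGroup t p →+ ℚ :=
  QuotientAddGroup.lift _ (rhoF t p)
    (fun x hx => (AddMonoidHom.mem_ker).mpr (rhoF_rel t p hp x hx))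

lemma rho_Lx (t : ℕ) (p : Fin t → ℕ) (hp : ∀ i, 0 < p i) (j : Fin t) :
    rho t p hp (Lx t p j) = ((p j : ℚ))⁻¹ := by
  rw [rho, Lx, QuotientAddGroup.lift_mk, rhoF, FreeAbelianGroup.lift_apply_of, Sum.elim_inl]

lemma rho_Lc (t : ℕ) (p : Fin t → ℕ) (hp : ∀ i, 0 < p i) :
    rho t p hp (Lc t p) = 1 := by
  rw [rho, Lc, QuotientAddGroup.lift_mk, rhoF, FreeAbelianGroup.lift_apply_of, Sum.elim_inr]

lemma rho_normal (t : ℕ) (p : Fin t → ℕ) (hp : ∀ i, 0 < p i)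
    (m : ℤ) (a : Fin t → ℤ) :
    rho t p hp (m • Lc t p + ∑ j, a j • Lx t p j)
      = (m : ℚ) + ∑ j, (a j : ℚ) * ((p j : ℚ))⁻¹ := by
  rw [map_add, map_zsmul, map_sum, rho_Lc, zsmul_eq_mul, mul_one]
  congr 1
  refine Finset.sum_congr rfl fun j _ => ?_
  rw [map_zsmul, rho_Lx, zsmul_eq_mul]

/-- Uniqueness of the normal form coefficients. -/
lemma normal_unique (t : ℕ) (p : Fin t → ℕ) (hp : ∀ i, 0 < p i)
    (m1 m2 : ℤ) (a1 a2 : Fin t → ℤ)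
    (h1 : ∀ i, 0 ≤ a1 i ∧ a1 i < (p i : ℤ))
    (h2 : ∀ i, 0 ≤ a2 i ∧ a2 i < (p i : ℤ))
    (heq : m1 • Lc t p + ∑ i, a1 i • Lx t p i
      = m2 • Lc t p + ∑ i, a2 i • Lx t p i) :
    m1 = m2 ∧ a1 = a2 := by
  have ha : a1 = a2 := by
    funext i
    have := congrArg (chi t p i) heq
    rw [chi_normal, chi_normal] at this
    rw [ZMod.intCast_eq_intCast_iff] at this
    have h1' := (h1 i)
    have h2' := (h2 i)
    have e1 : a1 i % (p i : ℤ) = a1 i := Int.emod_eq_of_lt h1'.1 h1'.2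
    have e2 : a2 i % (p i : ℤ) = a2 i := Int.emod_eq_of_lt h2'.1 h2'.2
    have h3 : a1 i % (p i : ℤ) = a2 i % (p i : ℤ) := this
    rwa [e1, e2] at h3
  refine ⟨?_, ha⟩
  subst ha
  have := congrArg (rho t p hp) heq
  rw [rho_normal, rho_normal, add_right_cancel_iff] at this
  exact_mod_cast this

/-- Every element `g` of `𝕃(p)` can be written uniquely as
`g = m • c + ∑ i, m_i • x_i` with `m ∈ ℤ` and `0 ≤ m_i < p_i`. -/
theorem normal_form_exists_unique (t : ℕ) (ht : 3 ≤ t)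
    (p : Fin t → ℕ) (hp : ∀ i, 0 < p i) (g : LGroup t p) :
    ∃! mf : ℤ × (Fin t → ℤ),
      (∀ i, 0 ≤ mf.2 i ∧ mf.2 i < (p i : ℤ)) ∧
      g = mf.1 • Lc t p + ∑ i, mf.2 i • Lx t p i := by
  obtain ⟨m, a, h⟩ := exists_repr t p g
  have hpne : ∀ i, ((p i : ℤ)) ≠ 0 := fun i => by exact_mod_cast (hp i).ne'
  refine ⟨(m + ∑ i, a i / (p i : ℤ), fun i => a i % (p i : ℤ)), ⟨?_, ?_⟩, ?_⟩
  · intro i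
    exact ⟨Int.emod_nonneg _ (hpne i),
      Int.emod_lt_of_pos _ (by exact_mod_cast hp i)⟩
  · rw [h, renorm]
  · rintro ⟨m', a'⟩ ⟨hb, hg⟩
    have hbnd : ∀ i, 0 ≤ (a i % (p i : ℤ)) ∧ (a i % (p i : ℤ)) < (p i : ℤ) :=
      fun i => ⟨Int.emod_nonneg _ (hpne i),
        Int.emod_lt_of_pos _ (by exact_mod_cast hp i)⟩
    have heq : m' • Lc t p + ∑ i, a' i • Lx t p i
        = (m + ∑ i, a i / (p i : ℤ)) • Lc t p
          + ∑ i, (a i % (p i : ℤ)) • Lx t p i := by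
      rw [← hg, h, renorm]
    obtain ⟨hm, haeq⟩ := normal_unique t p hp m' (m + ∑ i, a i / (p i : ℤ))
      a' (fun i => a i % (p i : ℤ)) hb hbnd heq
    exact Prod.ext hm haeq
end

section
/- The submonoid P of 𝕃(p) generated by x_1,…,x_t is a positive cone: if g ∈ P and −g ∈ P then g = 0. Consequently, the relation g ≤ h defined by h − g ∈ P is a translation-invariant partial order on 𝕃(p). -/
open scoped TensorProduct

/-- The submonoid `P` of `𝕃(p)` generated by `x_1,…,x_t` is a positive cone:
if `g ∈ P` and `−g ∈ P` then `g = 0`.  Consequently the relation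
`g ≤ h ↔ h − g ∈ P` is a translation-invariant partial order on `𝕃(p)`. -/
theorem positive_cone_partial_order (t : ℕ) (ht : 3 ≤ t)
    (p : Fin t → ℕ) (hp : ∀ i, 0 < p i) :
    (∀ g : LGroup t p,
        g ∈ AddSubmonoid.closure (Set.range (Lx t p)) →
        -g ∈ AddSubmonoid.closure (Set.range (Lx t p)) → g = 0) ∧
    IsPartialOrder (LGroup t p)
      (fun g h => h - g ∈ AddSubmonoid.closure (Set.range (Lx t p))) ∧
    (∀ g h k : LGroup t p,
        h - g ∈ AddSubmonoid.closure (Set.range (Lx t p)) →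
        (k + h) - (k + g) ∈ AddSubmonoid.closure (Set.range (Lx t p))) := by
  classical
  set φ : FreeAbelianGroup (Fin t ⊕ Unit) →+ ℚ :=
    FreeAbelianGroup.lift (Sum.elim (fun i => ((p i : ℚ))⁻¹) (fun _ => 1)) with hφ
  have hker : Lrel t p ≤ φ.ker := by
    rw [Lrel, AddSubgroup.closure_le]
    rintro g ⟨i, rfl⟩
    have hpi : (p i : ℚ) ≠ 0 := Nat.cast_ne_zero.mpr (hp i).ne'
    simp [hφ, AddMonoidHom.mem_ker, FreeAbelianGroup.lift_apply_of, mul_inv_cancel₀ hpi]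
  set ψ : LGroup t p →+ ℚ := QuotientAddGroup.lift (Lrel t p) φ hker with hψ
  have hψx : ∀ i, ψ (Lx t p i) = ((p i : ℚ))⁻¹ := by
    intro i
    simp [hψ, hφ, Lx, FreeAbelianGroup.lift_apply_of]
  have key : ∀ g ∈ AddSubmonoid.closure (Set.range (Lx t p)),
      0 ≤ ψ g ∧ (ψ g = 0 → g = 0) := by
    intro g hg
    induction hg using AddSubmonoid.closure_induction with
    | mem x hx =>
      obtain ⟨i, rfl⟩ := hx
      have hpi : (0:ℚ) < ((p i : ℚ))⁻¹ := inv_pos.mpr (by exact_mod_cast hp i)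
      rw [hψx i]
      exact ⟨le_of_lt hpi, fun h => absurd h hpi.ne'⟩
    | zero => simp
    | add a b _ _ ha hb =>
      refine ⟨by simpa using add_nonneg ha.1 hb.1, fun h => ?_⟩
      rw [map_add] at h
      have h1 : ψ a = 0 := le_antisymm (by linarith [hb.1]) ha.1
      have h2 : ψ b = 0 := by linarith
      rw [ha.2 h1, hb.2 h2, add_zero]
  have cone : ∀ g : LGroup t p,
      g ∈ AddSubmonoid.closure (Set.range (Lx t p)) →
      -g ∈ AddSubmonoid.closure (Set.range (Lx t p)) → g = 0 := by
    intro g hg hng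
    have h1 := key g hg
    have h2 := (key (-g) hng).1
    rw [map_neg] at h2
    exact h1.2 (le_antisymm (by linarith) h1.1)
  refine ⟨cone, ?_, ?_⟩
  · refine { refl := ?_, trans := ?_, antisymm := ?_ }
    · intro g
      simpa using AddSubmonoid.zero_mem _
    · intro a b c hab hbc
      have := AddSubmonoid.add_mem _ hbc hab
      simpa [sub_add_sub_cancel] using this
    · intro a b hab hba
      have := cone (b - a) hab (by simpa [neg_sub] using hba)
      have := sub_eq_zero.mp this
      exact this.symm
  · intro g h k hgh
    simpa [add_sub_add_left_eq_sub] using hgh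
end

section
/- An element g of 𝕃(p) lies in the positive cone P (i.e. g ≥ 0) if and only if in its unique normal form g = m·c + Σ_{i=1}^t m_i·x_i with 0 ≤ m_i < p_i, the integer coefficient m satisfies m ≥ 0. -/
open scoped TensorProduct

noncomputable def Theta (t : ℕ) (p : Fin t → ℕ) : LGroup t p →+ ℤ :=
  QuotientAddGroup.lift (Lrel t p)
    (FreeAbelianGroup.lift (Sum.elim (fun i => (∏ j, (p j : ℤ)) / p i)
      (fun _ => ∏ j, (p j : ℤ))))
    (by
      have h : Lrel t p ≤ (FreeAbelianGroup.lift (Sum.elim (fun i => (∏ j, (p j : ℤ)) / p i)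
          (fun _ => ∏ j, (p j : ℤ)))).ker := by
        apply (AddSubgroup.closure_le _).2
        rintro g ⟨i, rfl⟩
        have hdvd : (p i : ℤ) ∣ ∏ j, (p j : ℤ) :=
          Finset.dvd_prod_of_mem _ (Finset.mem_univ i)
        simp [AddMonoidHom.mem_ker, map_sub, map_nsmul, FreeAbelianGroup.lift_apply_of,
          nsmul_eq_mul, Int.mul_ediv_cancel' hdvd]
      exact fun g hg => h hg)

noncomputable def Psi (t : ℕ) (p : Fin t → ℕ) (j : Fin t) : LGroup t p →+ ZMod (p j) :=
  QuotientAddGroup.lift (Lrel t p)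
    (FreeAbelianGroup.lift (Sum.elim (fun i => if i = j then (1 : ZMod (p j)) else 0)
      (fun _ => 0)))
    (by
      have h : Lrel t p ≤ (FreeAbelianGroup.lift (Sum.elim
          (fun i => if i = j then (1 : ZMod (p j)) else 0) (fun _ => 0))).ker := by
        apply (AddSubgroup.closure_le _).2
        rintro g ⟨i, rfl⟩
        rcases eq_or_ne i j with rfl | hij
        · simp [AddMonoidHom.mem_ker, map_sub, map_nsmul, FreeAbelianGroup.lift_apply_of,
            nsmul_eq_mul, ZMod.natCast_self]
        · simp [AddMonoidHom.mem_ker, map_sub, map_nsmul, FreeAbelianGroup.lift_apply_of, hij]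
      exact fun g hg => h hg)

theorem Theta_Lx (t : ℕ) (p : Fin t → ℕ) (i : Fin t) :
    Theta t p (Lx t p i) = (∏ j, (p j : ℤ)) / p i := by
  simp [Theta, Lx, FreeAbelianGroup.lift_apply_of]

theorem Theta_Lc (t : ℕ) (p : Fin t → ℕ) :
    Theta t p (Lc t p) = ∏ j, (p j : ℤ) := by
  simp [Theta, Lc, FreeAbelianGroup.lift_apply_of]

theorem Psi_Lx (t : ℕ) (p : Fin t → ℕ) (j i : Fin t) :
    Psi t p j (Lx t p i) = if i = j then 1 else 0 := by
  simp [Psi, Lx, FreeAbelianGroup.lift_apply_of]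

theorem Psi_Lc (t : ℕ) (p : Fin t → ℕ) (j : Fin t) :
    Psi t p j (Lc t p) = 0 := by
  simp [Psi, Lc, FreeAbelianGroup.lift_apply_of]

theorem Lc_eq (t : ℕ) (p : Fin t → ℕ) (i : Fin t) :
    (p i) • Lx t p i = Lc t p := by
  rw [Lx, Lc, ← QuotientAddGroup.mk_nsmul, QuotientAddGroup.eq_iff_sub_mem]
  exact AddSubgroup.subset_closure ⟨i, rfl⟩


/-- An element `g` of `𝕃(p)` lies in the positive cone `P` generated by
`x_1,…,x_t` if and only if the coefficient `m` in its normal form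
`g = m • c + ∑ i, m_i • x_i` (with `0 ≤ m_i < p_i`) satisfies `m ≥ 0`. -/
theorem mem_positive_cone_iff (t : ℕ) (ht : 3 ≤ t)
    (p : Fin t → ℕ) (hp : ∀ i, 0 < p i)
    (g : LGroup t p) (m : ℤ) (f : Fin t → ℤ)
    (hf : ∀ i, 0 ≤ f i ∧ f i < (p i : ℤ))
    (hg : g = m • Lc t p + ∑ i, f i • Lx t p i) :
    g ∈ AddSubmonoid.closure (Set.range (Lx t p)) ↔ 0 ≤ m := by
  constructor
  · intro hmem
    -- g is a nonnegative combination of the generators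
    have hrep : ∃ n : Fin t → ℕ, g = ∑ i, (n i) • Lx t p i := by
      refine AddSubmonoid.closure_induction ?_ ?_ ?_ hmem
      · rintro x ⟨i, rfl⟩
        exact ⟨fun j => if j = i then 1 else 0, by simp [Finset.sum_ite_eq']⟩
      · exact ⟨0, by simp⟩
      · rintro x y _ _ ⟨n, rfl⟩ ⟨n', rfl⟩
        exact ⟨n + n', by simp [add_smul, Finset.sum_add_distrib]⟩
    obtain ⟨n, hn⟩ := hrep
    have heq : (∑ i, (n i) • Lx t p i) = m • Lc t p + ∑ i, f i • Lx t p i := by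
      rw [← hn, hg]
    -- residues: n j % p j = f j
    have hres : ∀ j, ((n j % p j : ℕ) : ℤ) = f j := by
      intro j
      have h1 := congrArg (Psi t p j) heq
      have h2 : ((n j : ℤ) : ZMod (p j)) = ((f j : ℤ) : ZMod (p j)) := by
        simpa [map_sum, map_nsmul, map_zsmul, Psi_Lx, Psi_Lc, smul_ite,
          Finset.sum_ite_eq', ZMod.natCast_self] using h1
      have h3 := (ZMod.intCast_eq_intCast_iff _ _ _).1 h2
      have h4 : (n j : ℤ) % (p j : ℤ) = f j % (p j : ℤ) := h3
      rw [Int.emod_eq_of_lt (hf j).1 (hf j).2] at h4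
      rw [← h4]
      push_cast
      ring
    -- apply Theta
    set N : ℤ := ∏ j, (p j : ℤ) with hN
    have hNpos : 0 < N := Finset.prod_pos fun i _ => by exact_mod_cast hp i
    have hth := congrArg (Theta t p) heq
    simp only [map_add, map_sum, map_nsmul, AddMonoidHom.map_zsmul, Theta_Lx, Theta_Lc] at hth
    have hdiv : ∀ i, (p i : ℤ) * (N / p i) = N := fun i =>
      Int.mul_ediv_cancel' (Finset.dvd_prod_of_mem _ (Finset.mem_univ i))
    have hlhs : (∑ i, (n i) • (N / (p i : ℤ)))
        = (∑ i, ((n i / p i : ℕ) : ℤ)) * N + ∑ i, f i • (N / (p i : ℤ)) := by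
      rw [Finset.sum_mul, ← Finset.sum_add_distrib]
      refine Finset.sum_congr rfl fun i _ => ?_
      have hni : (n i : ℤ) = (p i : ℤ) * ((n i / p i : ℕ) : ℤ) + f i := by
        rw [← hres i]; push_cast
        exact_mod_cast (Nat.div_add_mod (n i) (p i)).symm
      rw [nsmul_eq_mul, smul_eq_mul, hni]
      rw [add_mul, mul_comm ((p i : ℤ)) _, mul_assoc, hdiv i]
    rw [hlhs] at hth
    have hmN : m * N = (∑ i, ((n i / p i : ℕ) : ℤ)) * N := by
      have := hth
      rw [smul_eq_mul] at this
      linarith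
    have hm : m = ∑ i, ((n i / p i : ℕ) : ℤ) :=
      mul_right_cancel₀ (ne_of_gt hNpos) hmN
    rw [hm]
    positivity
  · intro hm
    rw [hg]
    have hi0 : (⟨0, by omega⟩ : Fin t) ∈ (Set.univ : Set (Fin t)) := trivial
    have hLc : Lc t p ∈ AddSubmonoid.closure (Set.range (Lx t p)) := by
      rw [← Lc_eq t p ⟨0, by omega⟩]
      exact nsmul_mem (AddSubmonoid.subset_closure (Set.mem_range_self _)) _
    refine AddSubmonoid.add_mem _ ?_ ?_
    · have : m • Lc t p = (m.toNat) • Lc t p := by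
        rw [← natCast_zsmul, Int.toNat_of_nonneg hm]
      rw [this]
      exact nsmul_mem hLc _
    · refine AddSubmonoid.sum_mem _ fun i _ => ?_
      have : f i • Lx t p i = ((f i).toNat) • Lx t p i := by
        rw [← natCast_zsmul, Int.toNat_of_nonneg (hf i).1]
      rw [this]
      exact nsmul_mem (AddSubmonoid.subset_closure (Set.mem_range_self _)) _
end

section
/- In the group 𝕃(p), the dualizing element ω = (t−2)·c − Σ_{i=1}^t x_i has finite order if and only if the Euler characteristic χ = 2 − Σ_{i=1}^t (1 − 1/p_i) equals 0; and in that case the order of ω in 𝕃(p) is exactly p = lcm(p_1,…,p_t). -/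
open scoped TensorProduct

section Aux

variable {t : ℕ} {p : Fin t → ℕ}

/-- Build a homomorphism out of `𝕃(p)`. -/
def Lhom {A : Type} [AddCommGroup A] (f : Fin t ⊕ Unit → A)
    (hf : ∀ i, (p i) • f (Sum.inl i) = f (Sum.inr ())) :
    LGroup t p →+ A :=
  QuotientAddGroup.lift (Lrel t p) (FreeAbelianGroup.lift f) (by
    intro g hg
    have : Lrel t p ≤ (FreeAbelianGroup.lift f).ker := by
      rw [Lrel, AddSubgroup.closure_le]
      rintro g ⟨i, rfl⟩
      simp [AddMonoidHom.mem_ker, map_nsmul, hf i]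
    exact this hg)

@[simp] lemma Lhom_Lx {A : Type} [AddCommGroup A] (f : Fin t ⊕ Unit → A)
    (hf : ∀ i, (p i) • f (Sum.inl i) = f (Sum.inr ())) (i : Fin t) :
    Lhom f hf (Lx t p i) = f (Sum.inl i) := by
  simp [Lhom, Lx, QuotientAddGroup.lift_mk']

@[simp] lemma Lhom_Lc {A : Type} [AddCommGroup A] (f : Fin t ⊕ Unit → A)
    (hf : ∀ i, (p i) • f (Sum.inl i) = f (Sum.inr ())) :
    Lhom f hf (Lc t p) = f (Sum.inr ()) := by
  simp [Lhom, Lc, QuotientAddGroup.lift_mk']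

lemma Lrel_nsmul_Lx (i : Fin t) : (p i) • Lx t p i = Lc t p := by
  rw [Lx, Lc]
  have : ((p i) • FreeAbelianGroup.of (Sum.inl i) :
      FreeAbelianGroup (Fin t ⊕ Unit)) - FreeAbelianGroup.of (Sum.inr ()) ∈ Lrel t p :=
    AddSubgroup.subset_closure ⟨i, rfl⟩
  have h2 : ((QuotientAddGroup.mk ((p i) • FreeAbelianGroup.of (Sum.inl i)) :
      LGroup t p)) = QuotientAddGroup.mk (FreeAbelianGroup.of (Sum.inr ())) := by
    rw [QuotientAddGroup.eq, neg_add_eq_sub, ← neg_sub]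
    exact AddSubgroup.neg_mem _ this
  rw [← h2]
  rfl

end Aux


/-- The dualizing element `ω = (t−2) • c − ∑ i, x_i` of `𝕃(p)` has finite
(additive) order if and only if the Euler characteristic
`χ = 2 − ∑ i (1 − 1/p_i)` is zero; in that case the order of `ω` is exactly
`p = lcm(p_1,…,p_t)`. -/
theorem omega_finite_order_iff (t : ℕ) (ht : 3 ≤ t)
    (p : Fin t → ℕ) (hp : ∀ i, 0 < p i) :
    (IsOfFinAddOrder (((t : ℤ) - 2) • Lc t p - ∑ i, Lx t p i) ↔
      (2 : ℚ) - ∑ i, (1 - 1 / (p i : ℚ)) = 0) ∧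
    ((2 : ℚ) - ∑ i, (1 - 1 / (p i : ℚ)) = 0 →
      addOrderOf (((t : ℤ) - 2) • Lc t p - ∑ i, Lx t p i) =
        Finset.univ.lcm p) := by
  set ω := (((t : ℤ) - 2) • Lc t p - ∑ i, Lx t p i) with hω
  set P := Finset.univ.lcm p with hP
  have hpne : ∀ i, (p i : ℚ) ≠ 0 := fun i => Nat.cast_ne_zero.2 (hp i).ne'
  -- the rational character φ
  set fφ : Fin t ⊕ Unit → ℚ := Sum.elim (fun j => 1 / (p j : ℚ)) (fun _ => 1) with hfφdef
  have hfφ : ∀ i, (p i) • fφ (Sum.inl i) = fφ (Sum.inr ()) := by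
    intro i
    simp [hfφdef, nsmul_eq_mul, mul_one_div, div_self (hpne i), mul_inv_cancel₀ (hpne i)]
  set φ : LGroup t p →+ ℚ := Lhom fφ hfφ with hφ
  have hφω : φ ω = ((t : ℚ) - 2) - ∑ i, 1 / (p i : ℚ) := by
    rw [hω]
    rw [map_sub, map_zsmul, map_sum]
    simp [hφ, Lhom_Lx, Lhom_Lc, hfφdef]
  -- χ = 0 ↔ φ ω = 0
  have hchi : ((2 : ℚ) - ∑ i, (1 - 1 / (p i : ℚ)) = 0) ↔ φ ω = 0 := by
    rw [hφω, Finset.sum_sub_distrib]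
    simp only [Finset.sum_const, Finset.card_univ, Fintype.card_fin, nsmul_eq_mul, mul_one]
    constructor <;> intro h <;> linarith
  -- P ≠ 0
  have hPpos : 0 < P := Nat.pos_of_ne_zero (fun h => by
    rw [hP, Finset.lcm_eq_zero_iff] at h
    obtain ⟨i, -, hi⟩ := h
    exact (hp i).ne' hi)
  -- each p i divides P
  have hdvdP : ∀ i, p i ∣ P := fun i => Finset.dvd_lcm (Finset.mem_univ i)
  -- key: if χ = 0 then P • ω = 0
  have hPsmul : ((2 : ℚ) - ∑ i, (1 - 1 / (p i : ℚ)) = 0) → P • ω = 0 := by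
    intro hχ
    have hφ0 : ((t : ℚ) - 2) - ∑ i, 1 / (p i : ℚ) = 0 := by
      rw [← hφω]; exact (hchi.1 hχ)
    have hPx : ∀ i, P • Lx t p i = (P / p i) • Lc t p := by
      intro i
      rw [← Lrel_nsmul_Lx i, smul_smul, Nat.div_mul_cancel (hdvdP i)]
    have hsum : (∑ i, (P / p i)) = (t - 2) * P := by
      have : ((∑ i, (P / p i) : ℕ) : ℚ) = (((t - 2) * P : ℕ) : ℚ) := by
        push_cast [Nat.cast_div_charZero (hdvdP _)]
        rw [Nat.cast_sub (by omega : 2 ≤ t)]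
        have : (∑ i, (P : ℚ) / (p i)) = (P : ℚ) * ∑ i, 1 / (p i : ℚ) := by
          rw [Finset.mul_sum]
          exact Finset.sum_congr rfl fun i _ => by field_simp
        rw [this]
        have : (∑ i, 1 / (p i : ℚ)) = (t : ℚ) - 2 := by linarith
        rw [this]; push_cast; ring
      exact_mod_cast this
    rw [hω, smul_sub, Finset.smul_sum]
    have h1 : P • (((t : ℤ) - 2) • Lc t p) = (((t : ℤ) - 2) * P) • Lc t p := by
      rw [smul_comm, ← natCast_zsmul, smul_smul]
    have h2 : (∑ i, P • Lx t p i) = (((t : ℤ) - 2) * P) • Lc t p := by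
      rw [Finset.sum_congr rfl fun i _ => hPx i]
      have : (∑ i, (P / p i) • Lc t p) = (∑ i, (P / p i)) • Lc t p := by
        rw [Finset.sum_smul]
      rw [this, hsum, ← natCast_zsmul]
      congr 1
      push_cast [Nat.cast_sub (by omega : 2 ≤ t)]
      ring
    rw [h1, h2, sub_self]
  constructor
  · constructor
    · intro hfin
      rw [hchi]
      have : IsOfFinAddOrder (φ ω) := φ.isOfFinAddOrder hfin
      rcases (isOfFinAddOrder_iff_nsmul_eq_zero).1 this with ⟨n, hn, hn0⟩
      rw [← Nat.cast_smul_eq_nsmul ℚ] at hn0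
      rcases smul_eq_zero.1 hn0 with h | h
      · exact absurd (by exact_mod_cast h : (n:ℚ) = 0) (by positivity)
      · exact h
    · intro hχ
      exact isOfFinAddOrder_iff_nsmul_eq_zero.2 ⟨P, hPpos, hPsmul hχ⟩
  · intro hχ
    have hPω := hPsmul hχ
    -- order divides P
    have hdvd1 : addOrderOf ω ∣ P := addOrderOf_dvd_of_nsmul_eq_zero hPω
    -- each p i divides order, via ZMod characters
    have hdvd2 : ∀ i, p i ∣ addOrderOf ω := by
      intro i
      haveI : NeZero (p i) := ⟨(hp i).ne'⟩
      set fψ : Fin t ⊕ Unit → ZMod (p i) :=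
        Sum.elim (fun k => if k = i then (1 : ZMod (p i)) else 0) (fun _ => 0) with hfψdef
      have hfψ : ∀ j, (p j) • fψ (Sum.inl j) = fψ (Sum.inr ()) := by
        intro j
        by_cases h : j = i
        · subst h; simp [hfψdef, ZMod.natCast_self]
        · simp [hfψdef, h]
      set ψ : LGroup t p →+ ZMod (p i) := Lhom fψ hfψ with hψdef
      have hψω : ψ ω = -1 := by
        rw [hω, map_sub, map_zsmul, map_sum]
        simp [hψdef, hfψdef, Lhom_Lx, Lhom_Lc, Finset.sum_ite_eq']
      have h0 : (addOrderOf ω) • ψ ω = 0 := by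
        rw [← map_nsmul, addOrderOf_nsmul_eq_zero, map_zero]
      rw [hψω, nsmul_eq_mul] at h0
      have : ((addOrderOf ω : ZMod (p i))) = 0 := by
        have := neg_eq_zero.1 (by rw [mul_neg_one] at h0; exact h0)
        exact this
      exact (ZMod.natCast_eq_zero_iff _ _).1 this
    have hdvd3 : P ∣ addOrderOf ω := Finset.lcm_dvd fun i _ => hdvd2 i
    exact Nat.dvd_antisymm hdvd1 hdvd3
end
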